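/- arXiv:1612.04761 — 2 statements merged into one kernel-verified Lean document; each statement's English description precedes it below -/
import Mathlib

section
/- Let (M_k) be a real-valued submartingale with respect to a filtration (F_k) with M_0 = 0, such that E[(M_{k+1}-M_k)^2 | F_k] ≥ δ for some δ > 0, and |M_{k+1}-M_k| ≤ m almost surely for some m < ∞. Then there exist constants C, m_0, γ > 0, depending only on δ and m, such that for every n ≥ 1 and every y ≥ m_0, P(max_{k ≤ n} |M_k| ≤ y) ≤ C·exp(−γ·n/y²). -/
open MeasureTheory Real

set_option maxHeartbeats 1000000 in
theorem stmt0 {Ω : Type*} {m : MeasurableSpace Ω} {μ : Measure Ω} [IsProbabilityMeasure μ]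
    (𝓕 : Filtration ℕ m) (M : ℕ → Ω → ℝ) (δ mb : ℝ) (hδ : 0 < δ)
    (hsub : Submartingale M 𝓕 μ) (h0 : ∀ ω, M 0 ω = 0)
    (hvar : ∀ k, ∀ᵐ ω ∂μ, δ ≤ (μ[fun ω' => (M (k + 1) ω' - M k ω') ^ 2 | 𝓕 k]) ω)
    (hbdd : ∀ k, ∀ᵐ ω ∂μ, |M (k + 1) ω - M k ω| ≤ mb) :
    ∃ C m0 γ : ℝ, 0 < C ∧ 0 < m0 ∧ 0 < γ ∧ ∀ n : ℕ, 1 ≤ n → ∀ y : ℝ, m0 ≤ y →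
      μ {ω | ∀ k ≤ n, |M k ω| ≤ y} ≤ ENNReal.ofReal (C * Real.exp (-γ * n / y ^ 2)) := by
  have hne : (Filter.NeBot (ae μ)) := ae_neBot.2 (IsProbabilityMeasure.ne_zero μ)
  have hmb : 0 ≤ mb := by
    obtain ⟨ω, hω⟩ := (hbdd 0).exists
    exact le_trans (abs_nonneg _) hω
  refine ⟨2, max 1 mb, Real.log 2 / (18 / δ + 1), by norm_num,
    lt_of_lt_of_le one_pos (le_max_left _ _), ?_, ?_⟩
  · apply div_pos (Real.log_pos (by norm_num))
    positivity
  intro n hn y hy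
  have hy1 : (1 : ℝ) ≤ y := le_trans (le_max_left _ _) hy
  have hmby : mb ≤ y := le_trans (le_max_right _ _) hy
  have hy0 : (0 : ℝ) < y := by linarith
  set H : ℝ := (2 * y + mb) ^ 2 with hH
  have h2ymb : (0 : ℝ) < 2 * y + mb := by linarith
  have hHpos : 0 < H := pow_pos h2ymb 2
  set T : ℕ → Set Ω := fun k => {ω | ∀ j ≤ k, |M j ω| ≤ y} with hTdef
  -- measurability of M
  have hMm : ∀ k, StronglyMeasurable (M k) := fun k => (hsub.1 k).mono (𝓕.le k)
  have hTmF : ∀ k, MeasurableSet[𝓕 k] (T k) := by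
    intro k
    have hEq : T k = ⋂ j ∈ Set.Iic k, {ω | |M j ω| ≤ y} := by
      ext ω; simp [hTdef, Set.mem_Iic]
    rw [hEq]
    refine MeasurableSet.biInter (Set.to_countable _) (fun j hj => ?_)
    have hEq2 : {ω | |M j ω| ≤ y} = M j ⁻¹' Set.Icc (-y) y := by
      ext ω; simp [abs_le, Set.mem_Icc]
    rw [hEq2]
    exact ((hsub.1 j).mono (𝓕.mono hj)).measurable measurableSet_Icc
  have hTm : ∀ k, MeasurableSet (T k) := fun k => (𝓕.le k) _ (hTmF k)
  have hTanti : ∀ {j k : ℕ}, j ≤ k → T k ⊆ T j :=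
    fun {j k} h ω hω i hi => hω i (le_trans hi h)
  set p : ℕ → ℝ := fun k => (μ (T k)).toReal with hpdef
  have hp_nonneg : ∀ k, 0 ≤ p k := fun k => ENNReal.toReal_nonneg
  have hp_mono : ∀ {j k : ℕ}, j ≤ k → p k ≤ p j := by
    intro j k h
    exact ENNReal.toReal_mono (measure_ne_top μ _) (measure_mono (hTanti h))
  have hp0 : p 0 ≤ 1 := by
    have := prob_le_one (μ := μ) (s := T 0)
    simpa [hpdef] using ENNReal.toReal_mono ENNReal.one_ne_top this
  -- a.e. bounds on M
  have hMb : ∀ k, ∀ᵐ ω ∂μ, |M k ω| ≤ k * mb := by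
    intro k
    induction k with
    | zero => filter_upwards with ω; simp [h0]
    | succ k ih =>
      filter_upwards [ih, hbdd k] with ω h1 h2
      have h3 : |M (k + 1) ω| ≤ |M k ω| + |M (k + 1) ω - M k ω| := by
        calc |M (k + 1) ω| = |M k ω + (M (k + 1) ω - M k ω)| := by congr 1; ring
          _ ≤ |M k ω| + |M (k + 1) ω - M k ω| := abs_add_le _ _
      push_cast
      linarith
  -- integrability helper
  have hbint : ∀ (f : Ω → ℝ) (c : ℝ), AEStronglyMeasurable f μ →
      (∀ᵐ ω ∂μ, |f ω| ≤ c) → Integrable f μ := by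
    intro f c hm hb
    exact (integrable_const c).mono' hm (by simpa [Real.norm_eq_abs] using hb)
  have int1 : ∀ k, Integrable (fun ω => (M k ω + y) ^ 2) μ := by
    intro k
    refine hbint _ ((k * mb + y) ^ 2)
      ((((hMm k).measurable.add_const y).pow_const 2).stronglyMeasurable.aestronglyMeasurable) ?_
    filter_upwards [hMb k] with ω h1
    have h2 : |M k ω + y| ≤ k * mb + y := by
      calc |M k ω + y| ≤ |M k ω| + |y| := abs_add_le _ _
        _ ≤ k * mb + y := by rw [abs_of_pos hy0]; linarith
    rw [abs_of_nonneg (sq_nonneg _)]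
    calc (M k ω + y) ^ 2 = |M k ω + y| ^ 2 := (sq_abs _).symm
      _ ≤ (k * mb + y) ^ 2 := pow_le_pow_left₀ (abs_nonneg _) h2 2
  have intD : ∀ k, Integrable (fun ω => M (k + 1) ω - M k ω) μ :=
    fun k => (hsub.integrable (k + 1)).sub (hsub.integrable k)
  have intD2 : ∀ k, Integrable (fun ω => (M (k + 1) ω - M k ω) ^ 2) μ := by
    intro k
    refine hbint _ (mb ^ 2)
      (((((hMm (k + 1)).measurable.sub (hMm k).measurable)).pow_const 2).stronglyMeasurable.aestronglyMeasurable) ?_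
    filter_upwards [hbdd k] with ω h1
    rw [abs_of_nonneg (sq_nonneg _)]
    calc (M (k + 1) ω - M k ω) ^ 2 = |M (k + 1) ω - M k ω| ^ 2 := (sq_abs _).symm
      _ ≤ mb ^ 2 := pow_le_pow_left₀ (abs_nonneg _) h1 2
  have int3 : ∀ k, Integrable (fun ω => (2 * (M k ω + y)) * (M (k + 1) ω - M k ω)) μ := by
    intro k
    have hkmb : (0 : ℝ) ≤ k * mb + y := by positivity
    refine hbint _ (2 * (k * mb + y) * mb)
      ((((hMm k).measurable.add_const y).const_mul 2).mul
        ((hMm (k + 1)).measurable.sub (hMm k).measurable)).stronglyMeasurable.aestronglyMeasurable ?_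
    filter_upwards [hMb k, hbdd k] with ω h1 h2
    have h3 : |M k ω + y| ≤ k * mb + y := by
      calc |M k ω + y| ≤ |M k ω| + |y| := abs_add_le _ _
        _ ≤ k * mb + y := by rw [abs_of_pos hy0]; linarith
    calc |2 * (M k ω + y) * (M (k + 1) ω - M k ω)|
        = 2 * |M k ω + y| * |M (k + 1) ω - M k ω| := by
          rw [abs_mul, abs_mul, abs_two]
      _ ≤ 2 * (k * mb + y) * mb := by
          nlinarith [abs_nonneg (M k ω + y), abs_nonneg (M (k + 1) ω - M k ω)]
  -- key conditional expectation inequality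
  have key : ∀ k, ∀ᵐ ω ∂μ, ω ∈ T k →
      (M k ω + y) ^ 2 + δ ≤ (μ[fun ω' => (M (k + 1) ω' + y) ^ 2 | 𝓕 k]) ω := by
    intro k
    have hdec : (fun ω' => (M (k + 1) ω' + y) ^ 2) =
        (fun ω' => (M k ω' + y) ^ 2) +
        ((fun ω' => (2 * (M k ω' + y)) * (M (k + 1) ω' - M k ω')) +
          (fun ω' => (M (k + 1) ω' - M k ω') ^ 2)) := by
      funext ω'; simp only [Pi.add_apply]; ring
    have c1 : μ[fun ω' => (M (k + 1) ω' + y) ^ 2 | 𝓕 k] =ᵐ[μ]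
        μ[fun ω' => (M k ω' + y) ^ 2 | 𝓕 k] +
        μ[(fun ω' => (2 * (M k ω' + y)) * (M (k + 1) ω' - M k ω')) +
          (fun ω' => (M (k + 1) ω' - M k ω') ^ 2) | 𝓕 k] := by
      rw [hdec]
      exact condExp_add (int1 k) ((int3 k).add (intD2 k)) _
    have c2 : μ[(fun ω' => (2 * (M k ω' + y)) * (M (k + 1) ω' - M k ω')) +
          (fun ω' => (M (k + 1) ω' - M k ω') ^ 2) | 𝓕 k] =ᵐ[μ]
        μ[fun ω' => (2 * (M k ω' + y)) * (M (k + 1) ω' - M k ω') | 𝓕 k] +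
        μ[fun ω' => (M (k + 1) ω' - M k ω') ^ 2 | 𝓕 k] :=
      condExp_add (int3 k) (intD2 k) _
    have c3 : μ[fun ω' => (M k ω' + y) ^ 2 | 𝓕 k] = fun ω' => (M k ω' + y) ^ 2 :=
      condExp_of_stronglyMeasurable (𝓕.le k)
        (((hsub.1 k).measurable.add_const y).pow_const 2).stronglyMeasurable (int1 k)
    have c4 : μ[fun ω' => (2 * (M k ω' + y)) * (M (k + 1) ω' - M k ω') | 𝓕 k] =ᵐ[μ]
        (fun ω' => 2 * (M k ω' + y)) * μ[fun ω' => M (k + 1) ω' - M k ω' | 𝓕 k] := by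
      refine condExp_stronglyMeasurable_mul_of_bound (𝓕.le k)
        (((hsub.1 k).measurable.add_const y).const_mul 2).stronglyMeasurable
        (intD k) (2 * (k * mb + y)) ?_
      filter_upwards [hMb k] with ω h1
      have h3 : |M k ω + y| ≤ k * mb + y := by
        calc |M k ω + y| ≤ |M k ω| + |y| := abs_add_le _ _
          _ ≤ k * mb + y := by rw [abs_of_pos hy0]; linarith
      rw [Real.norm_eq_abs, abs_mul, abs_two]
      have hkmb : (0 : ℝ) ≤ k * mb + y := by positivity
      nlinarith [abs_nonneg (M k ω + y)]
    have c5 : (0 : Ω → ℝ) ≤ᵐ[μ] μ[fun ω' => M (k + 1) ω' - M k ω' | 𝓕 k] := by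
      have := hsub.condExp_sub_nonneg (Nat.le_succ k)
      exact this
    filter_upwards [c1, c2, c4, c5, hvar k] with ω h1 h2 h4 h5 h6 hmem
    have hMk : |M k ω| ≤ y := hmem k le_rfl
    have hMky : 0 ≤ M k ω + y := by
      have := (abs_le.mp hMk).1; linarith
    have hprod : 0 ≤ 2 * (M k ω + y) * (μ[fun ω' => M (k + 1) ω' - M k ω' | 𝓕 k]) ω := by
      have h5' : 0 ≤ (μ[fun ω' => M (k + 1) ω' - M k ω' | 𝓕 k]) ω := h5
      positivity
    have hc3 := congrFun c3 ω
    rw [h1]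
    simp only [Pi.add_apply] at h2 ⊢
    rw [h2, hc3, h4]
    simp only [Pi.mul_apply]
    linarith
  -- integral recursion
  set a : ℕ → ℝ := fun k => ∫ ω in T k, (M k ω + y) ^ 2 ∂μ with hadef
  have ha_nonneg : ∀ k, 0 ≤ a k :=
    fun k => setIntegral_nonneg (hTm k) (fun ω _ => sq_nonneg _)
  have ha_le : ∀ k, a k ≤ H * p k := by
    intro k
    have hstep : a k ≤ ∫ _ω in T k, H ∂μ := by
      refine setIntegral_mono_on ((int1 k).integrableOn)
        (integrable_const H).integrableOn (hTm k) ?_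
      intro ω hω
      have hMk : |M k ω| ≤ y := hω k le_rfl
      have h1 : |M k ω + y| ≤ 2 * y + mb := by
        calc |M k ω + y| ≤ |M k ω| + |y| := abs_add_le _ _
          _ ≤ 2 * y + mb := by rw [abs_of_pos hy0]; linarith
      calc (M k ω + y) ^ 2 = |M k ω + y| ^ 2 := (sq_abs _).symm
        _ ≤ (2 * y + mb) ^ 2 := pow_le_pow_left₀ (abs_nonneg _) h1 2
    rw [setIntegral_const, smul_eq_mul, mul_comm] at hstep
    exact hstep
  have hrec : ∀ k, a k - H * p k + δ * p k ≤ a (k + 1) - H * p (k + 1) := by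
    intro k
    -- step 1 : a k + δ p k ≤ ∫_{T k} (M (k+1) + y)^2
    have S1 : a k + δ * p k ≤ ∫ ω in T k, (M (k + 1) ω + y) ^ 2 ∂μ := by
      have e1 : ∫ ω in T k, ((M k ω + y) ^ 2 + δ) ∂μ = a k + δ * p k := by
        rw [integral_add ((int1 k).integrableOn) (integrable_const δ).integrableOn,
          setIntegral_const, smul_eq_mul, mul_comm]
        rfl
      have e2 : ∫ ω in T k, ((M k ω + y) ^ 2 + δ) ∂μ ≤
          ∫ ω in T k, (μ[fun ω' => (M (k + 1) ω' + y) ^ 2 | 𝓕 k]) ω ∂μ := by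
        refine setIntegral_mono_on_ae (((int1 k).add (integrable_const δ)).integrableOn)
          integrable_condExp.integrableOn (hTm k) ?_
        filter_upwards [key k] with ω h1 hmem
        exact h1 hmem
      have e3 : ∫ ω in T k, (μ[fun ω' => (M (k + 1) ω' + y) ^ 2 | 𝓕 k]) ω ∂μ =
          ∫ ω in T k, (M (k + 1) ω + y) ^ 2 ∂μ :=
        setIntegral_condExp (𝓕.le k) (int1 (k + 1)) (hTmF k)
      linarith [e2.trans_eq e3, e1]
    -- step 2 : ∫_{T k} (M (k+1) + y)^2 ≤ a (k+1) + H (p k - p (k+1))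
    have hsubset : T (k + 1) ⊆ T k := hTanti (Nat.le_succ k)
    have hdiffm : MeasurableSet (T k \ T (k + 1)) := (hTm k).diff (hTm (k + 1))
    have hmeq : p (k + 1) + (μ (T k \ T (k + 1))).toReal = p k := by
      have h1 : μ (T k ∩ T (k + 1)) + μ (T k \ T (k + 1)) = μ (T k) :=
        measure_inter_add_diff (T k) (hTm (k + 1))
      rw [Set.inter_eq_self_of_subset_right hsubset] at h1
      have h2 := congrArg ENNReal.toReal h1
      rwa [ENNReal.toReal_add (measure_ne_top μ _) (measure_ne_top μ _)] at h2
    have S2 : ∫ ω in T k, (M (k + 1) ω + y) ^ 2 ∂μ ≤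
        a (k + 1) + H * (p k - p (k + 1)) := by
      have hunion : T (k + 1) ∪ (T k \ T (k + 1)) = T k := Set.union_diff_cancel hsubset
      have hsplit : ∫ ω in T k, (M (k + 1) ω + y) ^ 2 ∂μ =
          a (k + 1) + ∫ ω in T k \ T (k + 1), (M (k + 1) ω + y) ^ 2 ∂μ := by
        have hsplit2 := setIntegral_union (f := fun ω => (M (k + 1) ω + y) ^ 2) (μ := μ)
          Set.disjoint_sdiff_right hdiffm
          ((int1 (k + 1)).integrableOn) ((int1 (k + 1)).integrableOn)
        rw [hunion] at hsplit2
        exact hsplit2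
      have hbound : ∫ ω in T k \ T (k + 1), (M (k + 1) ω + y) ^ 2 ∂μ ≤
          H * (p k - p (k + 1)) := by
        have h1 : ∫ ω in T k \ T (k + 1), (M (k + 1) ω + y) ^ 2 ∂μ ≤
            ∫ _ω in T k \ T (k + 1), H ∂μ := by
          refine setIntegral_mono_on_ae ((int1 (k + 1)).integrableOn)
            (integrable_const H).integrableOn hdiffm ?_
          filter_upwards [hbdd k] with ω hb hmem
          have hMk : |M k ω| ≤ y := hmem.1 k le_rfl
          have h2 : |M (k + 1) ω + y| ≤ 2 * y + mb := by
            have h3 : |M (k + 1) ω| ≤ |M k ω| + |M (k + 1) ω - M k ω| := by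
              calc |M (k + 1) ω| = |M k ω + (M (k + 1) ω - M k ω)| := by congr 1; ring
                _ ≤ |M k ω| + |M (k + 1) ω - M k ω| := abs_add_le _ _
            calc |M (k + 1) ω + y| ≤ |M (k + 1) ω| + |y| := abs_add_le _ _
              _ ≤ 2 * y + mb := by rw [abs_of_pos hy0]; linarith
          calc (M (k + 1) ω + y) ^ 2 = |M (k + 1) ω + y| ^ 2 := (sq_abs _).symm
            _ ≤ (2 * y + mb) ^ 2 := pow_le_pow_left₀ (abs_nonneg _) h2 2
        rw [setIntegral_const, smul_eq_mul] at h1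
        have h4 : (μ (T k \ T (k + 1))).toReal = p k - p (k + 1) := by linarith
        rw [show μ.real (T k \ T (k + 1)) = p k - p (k + 1) from h4] at h1
        linarith [h1]
      linarith [hsplit, hbound]
    linarith [S1, S2]
  -- block estimate
  have hblock : ∀ s L : ℕ, (a s - H * p s) + δ * L * p (s + L) ≤ a (s + L) - H * p (s + L) := by
    intro s L
    induction L with
    | zero => simp
    | succ L ih =>
      have h1 := hrec (s + L)
      have h2 : p (s + L + 1) ≤ p (s + L) := hp_mono (Nat.le_succ _)
      have h3 : p (s + (L + 1)) = p (s + L + 1) := by ring_nf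
      have h4 : δ * (L : ℝ) * p (s + L + 1) ≤ δ * (L : ℝ) * p (s + L) := by
        apply mul_le_mul_of_nonneg_left h2
        exact mul_nonneg hδ.le (Nat.cast_nonneg L)
      have h5 : a (s + (L + 1)) = a (s + L + 1) := by ring_nf
      have h6 : δ * (L : ℝ) * p (s + L) ≤ a (s + L) - H * p (s + L) - (a s - H * p s) := by
        nlinarith [ih, mul_le_mul_of_nonneg_left h2 (mul_nonneg hδ.le (Nat.cast_nonneg L))]
      rw [h3, h5]
      push_cast
      nlinarith [h1, h4, h6, mul_le_mul_of_nonneg_left h2 hδ.le]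
  have hblock2 : ∀ s L : ℕ, δ * L * p (s + L) ≤ H * p s := by
    intro s L
    have h1 := hblock s L
    have h2 := ha_le (s + L)
    have h3 := ha_nonneg s
    linarith
  -- halving
  set L0 : ℕ := ⌈2 * H / δ⌉₊ with hL0def
  have hL0pos : 0 < L0 := Nat.ceil_pos.2 (by positivity)
  have hhalf : ∀ s, p (s + L0) ≤ p s / 2 := by
    intro s
    have h1 := hblock2 s L0
    have h2 : 2 * H / δ ≤ (L0 : ℝ) := Nat.le_ceil _
    have h3 : 2 * H ≤ δ * L0 := by
      rw [div_le_iff₀ hδ] at h2; linarith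
    have h4 : 2 * H * p (s + L0) ≤ δ * L0 * p (s + L0) :=
      mul_le_mul_of_nonneg_right h3 (hp_nonneg _)
    have h5 : H * (2 * p (s + L0)) ≤ H * p s := by linarith
    have h6 := (mul_le_mul_iff_right₀ hHpos).mp h5
    linarith
  have hiter : ∀ j : ℕ, p (j * L0) ≤ (1 / 2 : ℝ) ^ j := by
    intro j
    induction j with
    | zero => simpa using hp0
    | succ j ih =>
      have h1 : (j + 1) * L0 = j * L0 + L0 := by ring
      rw [h1]
      calc p (j * L0 + L0) ≤ p (j * L0) / 2 := hhalf _
        _ ≤ (1 / 2 : ℝ) ^ j / 2 := by linarith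
        _ = (1 / 2 : ℝ) ^ (j + 1) := by rw [pow_succ]; ring
  -- final numerics
  set j : ℕ := n / L0 with hjdef
  have hjn : j * L0 ≤ n := Nat.div_mul_le_self n L0
  have hpn : p n ≤ (1 / 2 : ℝ) ^ j := le_trans (hp_mono hjn) (hiter j)
  have hnlt : n < (j + 1) * L0 := by
    calc n = L0 * j + n % L0 := (Nat.div_add_mod n L0).symm
      _ < L0 * j + L0 := Nat.add_lt_add_left (Nat.mod_lt n hL0pos) _
      _ = (j + 1) * L0 := by ring
  have hyy : (1 : ℝ) ≤ y ^ 2 := by nlinarith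
  have hH9 : H ≤ 9 * y ^ 2 := by
    rw [hH]
    nlinarith [mul_nonneg (by linarith : (0:ℝ) ≤ 5 * y + mb) (by linarith : (0:ℝ) ≤ y - mb)]
  have hKpos : (0 : ℝ) < 18 / δ + 1 := by positivity
  have hL0le : (L0 : ℝ) ≤ (18 / δ + 1) * y ^ 2 := by
    have h1 : (L0 : ℝ) < 2 * H / δ + 1 := Nat.ceil_lt_add_one (by positivity)
    have h2 : 2 * H / δ ≤ 18 * y ^ 2 / δ := by
      apply (div_le_div_iff_of_pos_right hδ).mpr
      linarith
    have h3 : (18 / δ + 1) * y ^ 2 = 18 * y ^ 2 / δ + y ^ 2 := by ring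
    linarith
  have hjKy : (n : ℝ) / ((18 / δ + 1) * y ^ 2) ≤ (j : ℝ) + 1 := by
    have h1 : (n : ℝ) < ((j : ℝ) + 1) * L0 := by
      exact_mod_cast hnlt
    have h2 : ((j : ℝ) + 1) * (L0 : ℝ) ≤ ((j : ℝ) + 1) * ((18 / δ + 1) * y ^ 2) := by
      apply mul_le_mul_of_nonneg_left hL0le
      positivity
    rw [div_le_iff₀ (by positivity)]
    linarith
  -- assemble
  have hexp : ((1 / 2 : ℝ) ^ j : ℝ) ≤ 2 * Real.exp (-(Real.log 2 / (18 / δ + 1)) * n / y ^ 2) := by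
    have h1 : ((1 / 2 : ℝ) ^ j : ℝ) = Real.exp (-(j * Real.log 2)) := by
      rw [Real.exp_neg, Real.exp_nat_mul, Real.exp_log (by norm_num : (0:ℝ) < 2),
        one_div, inv_pow]
    rw [h1]
    have h2 : 2 * Real.exp (-(Real.log 2 / (18 / δ + 1)) * n / y ^ 2) =
        Real.exp (Real.log 2 + -(Real.log 2 / (18 / δ + 1)) * n / y ^ 2) := by
      rw [Real.exp_add, Real.exp_log (by norm_num : (0:ℝ) < 2)]
    rw [h2]
    apply Real.exp_le_exp.mpr
    have h3 : -(Real.log 2 / (18 / δ + 1)) * n / y ^ 2 =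
        -(Real.log 2 * ((n : ℝ) / ((18 / δ + 1) * y ^ 2))) := by
      field_simp
    rw [h3]
    have h4 : Real.log 2 * ((n : ℝ) / ((18 / δ + 1) * y ^ 2)) ≤
        Real.log 2 * ((j : ℝ) + 1) :=
      mul_le_mul_of_nonneg_left hjKy (Real.log_nonneg one_le_two)
    linarith
  have hfinal : p n ≤ 2 * Real.exp (-(Real.log 2 / (18 / δ + 1)) * n / y ^ 2) :=
    le_trans hpn hexp
  have hμT : μ (T n) = ENNReal.ofReal (p n) :=
    (ENNReal.ofReal_toReal (measure_ne_top μ _)).symm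
  calc μ {ω | ∀ k ≤ n, |M k ω| ≤ y} = μ (T n) := rfl
    _ = ENNReal.ofReal (p n) := hμT
    _ ≤ ENNReal.ofReal (2 * Real.exp (-(Real.log 2 / (18 / δ + 1)) * n / y ^ 2)) :=
      ENNReal.ofReal_le_ofReal hfinal
end

section
/- Let (M_k) be a submartingale with M_0 = 0, increments bounded by m, and conditional variance of increments at least δ > 0. Fix 1/2 < a < π/4 and ε > 0 such that g(u) = cos(π/4 + u) satisfies g'(u) ≤ 0 and g(u) ≥ ε on [−a,a]. Set γ = δ/16. Then there exists y_0 > 0 (depending on m, δ, ε) such that for all y ≥ y_0 and all k with |M_k/(2y)| ≤ a, E[g(M_{k+1}/(2y)) | F_k] ≤ exp(−γ/y²)·g(M_k/(2y)). -/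
open MeasureTheory Real

lemma my_cos_le {x r : ℝ} (hx : |x| ≤ r) (hr : r ≤ 1) :
    Real.cos x ≤ 1 - (1/2 - r^2 * (5/96)) * x^2 := by
  have h1 : |Real.cos x - (1 - x ^ 2 / 2)| ≤ |x| ^ 4 * (5 / 96) :=
    Real.cos_bound (hx.trans hr)
  have h2 := (abs_le.1 h1).2
  have h3 : x^2 ≤ r^2 := by nlinarith [abs_nonneg x, sq_abs x]
  have h4 : |x|^4 = x^2 * x^2 := by rw [show (4:ℕ) = 2*2 from rfl, pow_mul, sq_abs]; ring
  nlinarith [sq_nonneg x]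

lemma my_sin_ge {x r : ℝ} (hx : |x| ≤ r) (hr : r ≤ 1) :
    x - (r * (1/6) + r^2 * (5/96)) * x^2 ≤ Real.sin x := by
  have h1 : |Real.sin x - (x - x ^ 3 / 6)| ≤ |x| ^ 4 * (5 / 96) :=
    (Real.sin_bound (hx.trans hr)).trans (by
      rw [pow_succ]; nlinarith [pow_nonneg (abs_nonneg x) 4, hx.trans hr])
  have h2 := (abs_le.1 h1).1
  have h3 : x^2 ≤ r^2 := by nlinarith [abs_nonneg x, sq_abs x]
  have h4 : |x|^4 = x^2 * x^2 := by rw [show (4:ℕ) = 2*2 from rfl, pow_mul, sq_abs]; ring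
  have h5 : x^3 ≤ r * x^2 := by
    nlinarith [sq_nonneg x, le_abs_self x, sq_abs x, abs_nonneg x]
  nlinarith [sq_nonneg x]


lemma final_num (r c1 c2 G S U Vv W ε δ y : ℝ)
    (hc1 : c1 = 1/2 - r^2*(5/96)) (hc2 : c2 = r*(1/6) + r^2*(5/96))
    (hr_pos : 0 < r) (hr_half : r ≤ 1/2) (hrε : r ≤ ε/2) (hε : 0 < ε) (hδ : 0 < δ)
    (hy0 : 0 < y) (hεG : ε ≤ G) (hG1 : G ≤ 1) (hS0 : 0 ≤ S) (hS1 : S ≤ 1)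
    (pu : U ≤ 1 - c1 * W) (pv : -(c2 * W) ≤ Vv) (pV : δ/(4*y^2) ≤ W) :
    G * U - S * Vv ≤ Real.exp (-(δ/16) / y^2) * G := by
  have hG0 : 0 < G := lt_of_lt_of_le hε hεG
  have hW0 : 0 ≤ W := le_trans (by positivity) pV
  have hcoef : G / 4 ≤ c1 * G - c2 * S := by
    rw [hc1, hc2]
    nlinarith [mul_le_mul_of_nonneg_left hS1 (le_of_lt hr_pos), sq_nonneg r,
      mul_nonneg hS0 (le_of_lt hr_pos)]
  have step1 : G * U - S * Vv ≤ G - W * (c1 * G - c2 * S) := by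
    have q1 : G * U ≤ G * (1 - c1 * W) := mul_le_mul_of_nonneg_left pu hG0.le
    have q2 : S * (-(c2 * W)) ≤ S * Vv := mul_le_mul_of_nonneg_left pv hS0
    nlinarith
  have step2 : G - W * (c1 * G - c2 * S) ≤ G - W * (G / 4) := by
    nlinarith [mul_le_mul_of_nonneg_left hcoef hW0]
  have step3 : G - W * (G / 4) ≤ G * (1 - δ / (16 * y^2)) := by
    have h1 := mul_le_mul_of_nonneg_right pV (by linarith : (0:ℝ) ≤ G / 4)
    have h4 : δ / (4*y^2) * (G/4) = G * (δ / (16*y^2)) := by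
      rw [show (16:ℝ)*y^2 = (4*y^2)*4 from by ring, ← div_div]
      ring
    rw [h4] at h1
    nlinarith
  have step4 : G * (1 - δ / (16 * y^2)) ≤ Real.exp (-(δ/16) / y^2) * G := by
    have he := Real.add_one_le_exp (-(δ/16) / y^2)
    have hy' : y ≠ 0 := ne_of_gt hy0
    have heq : 1 - δ / (16 * y^2) = -(δ/16) / y^2 + 1 := by
      field_simp
      ring
    rw [heq, mul_comm (Real.exp _) G]
    exact mul_le_mul_of_nonneg_left he hG0.le
  linarith

theorem stmt2 {Ω : Type*} {m : MeasurableSpace Ω} {μ : Measure Ω} [IsProbabilityMeasure μ]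
    (𝓕 : Filtration ℕ m) (M : ℕ → Ω → ℝ) (δ mb a ε : ℝ) (hδ : 0 < δ) (hmb : 0 < mb)
    (hsub : Submartingale M 𝓕 μ) (h0 : ∀ ω, M 0 ω = 0)
    (hbdd : ∀ k ω, |M (k + 1) ω - M k ω| ≤ mb)
    (hvar : ∀ k, ∀ᵐ ω ∂μ, δ ≤ (μ[fun ω' => (M (k + 1) ω' - M k ω') ^ 2 | 𝓕 k]) ω)
    (ha : 1 / 2 < a) (ha' : a < π / 4) (hε : 0 < ε)
    (hg : ∀ u ∈ Set.Icc (-a) a,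
      deriv (fun v : ℝ => Real.cos (π / 4 + v)) u ≤ 0 ∧ ε ≤ Real.cos (π / 4 + u)) :
    ∃ y0 : ℝ, 0 < y0 ∧ ∀ y : ℝ, y0 ≤ y → ∀ k : ℕ, ∀ᵐ ω ∂μ,
      |M k ω / (2 * y)| ≤ a →
      (μ[fun ω' => Real.cos (π / 4 + M (k + 1) ω' / (2 * y)) | 𝓕 k]) ω ≤
        Real.exp (-(δ / 16) / y ^ 2) * Real.cos (π / 4 + M k ω / (2 * y)) := by
  have hle := 𝓕.le
  have ha0 : (0:ℝ) < a := by linarith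
  refine ⟨mb * (ε + 1) / ε, by positivity, ?_⟩
  intro y hy k
  have hy0 : (0:ℝ) < y := lt_of_lt_of_le (by positivity) hy
  have h2y : (0:ℝ) < 2 * y := by positivity
  set r : ℝ := mb / (2 * y) with hr_def
  have hr_pos : 0 < r := by positivity
  have hr_le : r ≤ ε / (2 * (ε + 1)) := by
    rw [hr_def, div_le_div_iff₀ h2y (by positivity)]
    rw [div_le_iff₀ hε] at hy
    nlinarith
  have hr_half : r ≤ 1/2 := by
    refine hr_le.trans ?_
    rw [div_le_div_iff₀ (by positivity) (by norm_num)]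
    nlinarith
  have hr1 : r ≤ 1 := by linarith
  have hrε : r ≤ ε / 2 := by
    refine hr_le.trans ?_
    rw [div_le_div_iff₀ (by positivity) (by norm_num)]
    nlinarith
  -- basic measurability / integrability
  have hMmeas : ∀ n, Measurable (M n) := fun n => ((hsub.1 n).mono (hle n)).measurable
  set H : Ω → ℝ := fun ω => (M (k+1) ω - M k ω) / (2 * y) with hH_def
  have hHmeas : Measurable H := ((hMmeas (k+1)).sub (hMmeas k)).div_const _
  have hHbd : ∀ ω, |H ω| ≤ r := by
    intro ω
    rw [hH_def, hr_def]
    simp only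
    rw [abs_div, abs_of_pos h2y]
    gcongr
    exact hbdd k ω
  have intb : ∀ {f : Ω → ℝ} (C : ℝ), Measurable f → (∀ ω, |f ω| ≤ C) → Integrable f μ := by
    intro f C hf hb
    exact ⟨hf.aestronglyMeasurable,
      HasFiniteIntegral.of_bounded (C := C)
        (ae_of_all _ fun ω => by simpa [Real.norm_eq_abs] using hb ω)⟩
  set A : Ω → ℝ := fun ω => Real.cos (π/4 + M k ω / (2*y)) with hA_def
  set B : Ω → ℝ := fun ω => Real.sin (π/4 + M k ω / (2*y)) with hB_def
  set u : Ω → ℝ := fun ω => Real.cos (H ω) with hu_def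
  set v : Ω → ℝ := fun ω => Real.sin (H ω) with hv_def
  have hA : StronglyMeasurable[𝓕 k] A :=
    (Real.continuous_cos.comp (continuous_const.add (continuous_id.div_const _))).comp_stronglyMeasurable
      (hsub.1 k)
  have hB : StronglyMeasurable[𝓕 k] B :=
    (Real.continuous_sin.comp (continuous_const.add (continuous_id.div_const _))).comp_stronglyMeasurable
      (hsub.1 k)
  have hAm : Measurable A := (hA.mono (hle k)).measurable
  have hBm : Measurable B := (hB.mono (hle k)).measurable
  have hum : Measurable u := Real.measurable_cos.comp hHmeas
  have hvm : Measurable v := Real.measurable_sin.comp hHmeas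
  have intu : Integrable u μ := intb 1 hum fun ω => Real.abs_cos_le_one _
  have intv : Integrable v μ := intb 1 hvm fun ω => Real.abs_sin_le_one _
  have intAu : Integrable (A * u) μ := by
    refine intb 1 (hAm.mul hum) fun ω => ?_
    rw [Pi.mul_apply, abs_mul]
    exact mul_le_one₀ (Real.abs_cos_le_one _) (abs_nonneg _) (Real.abs_cos_le_one _)
  have intBv : Integrable (B * v) μ := by
    refine intb 1 (hBm.mul hvm) fun ω => ?_
    rw [Pi.mul_apply, abs_mul]
    exact mul_le_one₀ (Real.abs_sin_le_one _) (abs_nonneg _) (Real.abs_sin_le_one _)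
  have intH : Integrable H μ := intb r hHmeas hHbd
  have intH2 : Integrable (fun ω => H ω ^ 2) μ := by
    refine intb (r^2) (hHmeas.pow_const 2) fun ω => ?_
    rw [abs_pow]
    exact pow_le_pow_left₀ (abs_nonneg _) (hHbd ω) 2
  set V : Ω → ℝ := μ[fun ω => H ω ^ 2 | 𝓕 k] with hV_def
  -- decomposition
  have hdec : (fun ω' => Real.cos (π/4 + M (k+1) ω' / (2*y))) = A * u - B * v := by
    funext ω
    have harg : π/4 + M (k+1) ω / (2*y) = (π/4 + M k ω / (2*y)) + H ω := by
      rw [hH_def]; field_simp; ring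
    rw [Pi.sub_apply, Pi.mul_apply, Pi.mul_apply, harg, Real.cos_add]
  have e1 : μ[A * u - B * v | 𝓕 k] =ᵐ[μ] μ[A * u | 𝓕 k] - μ[B * v | 𝓕 k] :=
    condExp_sub intAu intBv (𝓕 k)
  have e2 : μ[A * u | 𝓕 k] =ᵐ[μ] A * μ[u | 𝓕 k] :=
    condExp_mul_of_stronglyMeasurable_left hA intAu intu
  have e3 : μ[B * v | 𝓕 k] =ᵐ[μ] B * μ[v | 𝓕 k] :=
    condExp_mul_of_stronglyMeasurable_left hB intBv intv
  -- conditional variance lower bound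
  have hVlb : ∀ᵐ ω ∂μ, δ / (4 * y^2) ≤ V ω := by
    have hsm : (fun ω => H ω ^ 2)
        = ((1/(2*y))^2 : ℝ) • (fun ω' => (M (k+1) ω' - M k ω') ^ 2) := by
      funext ω
      simp only [Pi.smul_apply, smul_eq_mul, hH_def]
      field_simp
    have hce := condExp_smul (μ := μ) (m := 𝓕 k) ((1/(2*y))^2 : ℝ)
      (fun ω' => (M (k+1) ω' - M k ω') ^ 2)
    rw [hV_def, hsm]
    filter_upwards [hce, hvar k] with ω h1 h2
    rw [h1]
    simp only [Pi.smul_apply, smul_eq_mul]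
    have hy' : y ≠ 0 := ne_of_gt hy0
    have : δ / (4 * y^2) = (1/(2*y))^2 * δ := by
      rw [div_pow, one_pow, show ((2:ℝ)*y)^2 = 4*y^2 from by ring]
      ring
    rw [this]
    exact mul_le_mul_of_nonneg_left h2 (by positivity)
  -- bound on cos part
  set c1 : ℝ := 1/2 - r^2 * (5/96) with hc1_def
  have intR1 : Integrable (fun ω => 1 - c1 * H ω ^ 2) μ :=
    (integrable_const 1).sub (intH2.const_mul c1)
  have hu_ae : μ[u | 𝓕 k] ≤ᵐ[μ] fun ω => 1 - c1 * V ω := by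
    have h1 := condExp_mono (m := 𝓕 k) (μ := μ) intu intR1 (ae_of_all _ fun ω => my_cos_le (hHbd ω) hr1)
    have hfun : (fun ω => 1 - c1 * H ω ^ 2)
        = (fun _ => (1:ℝ)) - c1 • (fun ω => H ω ^ 2) := rfl
    have h2 : μ[(fun ω => 1 - c1 * H ω ^ 2) | 𝓕 k] =ᵐ[μ] fun ω => 1 - c1 * V ω := by
      rw [hfun]
      refine (condExp_sub (integrable_const 1) (intH2.smul c1) (𝓕 k)).trans ?_
      rw [condExp_const (hle k)]
      filter_upwards [condExp_smul (μ := μ) (m := 𝓕 k) c1 (fun ω => H ω ^ 2)] with ω hω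
      simp only [Pi.sub_apply, Pi.smul_apply, smul_eq_mul] at hω ⊢
      rw [hω]
    exact h1.trans h2.le
  -- bound on sin part
  set c2 : ℝ := r * (1/6) + r^2 * (5/96) with hc2_def
  have intR2 : Integrable (fun ω => H ω - c2 * H ω ^ 2) μ := intH.sub (intH2.const_mul c2)
  have hHnn : 0 ≤ᵐ[μ] μ[H | 𝓕 k] := by
    have hsm : H = ((2*y)⁻¹ : ℝ) • (M (k+1) - M k) := by
      funext ω
      simp only [Pi.smul_apply, Pi.sub_apply, smul_eq_mul, hH_def]
      ring
    have hce := condExp_smul (μ := μ) (m := 𝓕 k) ((2*y)⁻¹ : ℝ) (M (k+1) - M k)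
    rw [hsm]
    filter_upwards [hce, hsub.condExp_sub_nonneg (Nat.le_succ k)] with ω h1 h2
    rw [h1]
    simp only [Pi.smul_apply, smul_eq_mul]
    exact mul_nonneg (by positivity) h2
  have hv_ae : (fun ω => -(c2 * V ω)) ≤ᵐ[μ] μ[v | 𝓕 k] := by
    have h1 := condExp_mono (m := 𝓕 k) (μ := μ) intR2 intv (ae_of_all _ fun ω => my_sin_ge (hHbd ω) hr1)
    have hfun : (fun ω => H ω - c2 * H ω ^ 2) = H - c2 • (fun ω => H ω ^ 2) := rfl
    have h2 : μ[(fun ω => H ω - c2 * H ω ^ 2) | 𝓕 k]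
        =ᵐ[μ] fun ω => (μ[H | 𝓕 k]) ω - c2 * V ω := by
      rw [hfun]
      refine (condExp_sub intH (intH2.smul c2) (𝓕 k)).trans ?_
      filter_upwards [condExp_smul (μ := μ) (m := 𝓕 k) c2 (fun ω => H ω ^ 2)] with ω hω
      simp only [Pi.sub_apply, Pi.smul_apply, smul_eq_mul] at hω ⊢
      rw [hω]
    filter_upwards [h1, h2, hHnn] with ω p1 p2 p3
    simp only [Pi.zero_apply] at p3
    have := p2 ▸ p1
    linarith
  -- wrap up
  rw [hdec]
  filter_upwards [e1, e2, e3, hu_ae, hv_ae, hVlb] with ω p1 p2 p3 pu pv pV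
  intro hXa
  set x := M k ω / (2 * y) with hx_def
  have hx : x ∈ Set.Icc (-a) a := ⟨(abs_le.1 hXa).1, (abs_le.1 hXa).2⟩
  obtain ⟨hderiv, hεG⟩ := hg x hx
  set G := Real.cos (π/4 + x) with hG_def
  set S := Real.sin (π/4 + x) with hS_def
  have hS0 : 0 ≤ S := by
    have hd : HasDerivAt (fun v : ℝ => Real.cos (π/4 + v)) (-Real.sin (π/4 + x)) x := by
      simpa [Function.comp_def] using (Real.hasDerivAt_cos (π/4 + x)).comp x ((hasDerivAt_id x).const_add (π/4))
    rw [hd.deriv] at hderiv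
    rw [hS_def]; linarith
  have hG0 : 0 < G := lt_of_lt_of_le hε hεG
  have hG1 : G ≤ 1 := Real.cos_le_one _
  have hS1 : S ≤ 1 := Real.sin_le_one _
  have hval : (μ[A * u - B * v | 𝓕 k]) ω = G * (μ[u | 𝓕 k]) ω - S * (μ[v | 𝓕 k]) ω := by
    rw [p1, Pi.sub_apply, p2, p3, Pi.mul_apply, Pi.mul_apply]
  rw [hval]
  exact final_num r c1 c2 G S _ _ (V ω) ε δ y hc1_def hc2_def hr_pos hr_half hrε hε hδ hy0
    hεG hG1 hS0 hS1 pu pv pV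
end
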